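/- The (real) Fréchet derivative Df(z) : ℂ³ → ℝ³ of the Harvey–Lawson map fails to be surjective at z = (z₁, z₂, z₃) if and only if at least two of the coordinates z₁, z₂, z₃ vanish; that is, the set of singular points of fibers of f is the union of the three coordinate axes (ℂ × {0} × {0}) ∪ ({0} × ℂ × {0}) ∪ ({0} × {0} × ℂ). -/

import Mathlib

open Complex

/-- The Harvey–Lawson map `f : ℂ³ → ℝ³`. -/
noncomputable def HarveyLawson (z : Fin 3 → ℂ) : Fin 3 → ℝ :=
  ![(z 0 * z 1 * z 2).im,
    ‖z 0‖ ^ 2 - ‖z 1‖ ^ 2,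
    ‖z 0‖ ^ 2 - ‖z 2‖ ^ 2]

open ContinuousLinearMap in
/-- First component of the derivative of the Harvey–Lawson map. -/
noncomputable def HLd0 (z : Fin 3 → ℂ) : (Fin 3 → ℂ) →L[ℝ] ℝ :=
  Complex.imCLM.comp
    ((z 1 * z 2) • proj 0 + (z 0 * z 2) • proj 1 + (z 0 * z 1) • proj 2)

open ContinuousLinearMap in
/-- Second component of the derivative of the Harvey–Lawson map. -/
noncomputable def HLd1 (z : Fin 3 → ℂ) : (Fin 3 → ℂ) →L[ℝ] ℝ :=
  Complex.reCLM.comp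
    ((2 * (starRingEnd ℂ) (z 0)) • proj 0 - (2 * (starRingEnd ℂ) (z 1)) • proj 1)

open ContinuousLinearMap in
/-- Third component of the derivative of the Harvey–Lawson map. -/
noncomputable def HLd2 (z : Fin 3 → ℂ) : (Fin 3 → ℂ) →L[ℝ] ℝ :=
  Complex.reCLM.comp
    ((2 * (starRingEnd ℂ) (z 0)) • proj 0 - (2 * (starRingEnd ℂ) (z 2)) • proj 2)

/-- The derivative of the Harvey–Lawson map. -/
noncomputable def HLD (z : Fin 3 → ℂ) : (Fin 3 → ℂ) →L[ℝ] (Fin 3 → ℝ) :=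
  ContinuousLinearMap.pi ![HLd0 z, HLd1 z, HLd2 z]

open ContinuousLinearMap in
lemma normSq_hasFDerivAt (z : Fin 3 → ℂ) (j : Fin 3) :
    HasFDerivAt (fun z : Fin 3 → ℂ => ‖z j‖ ^ 2)
      (Complex.reCLM.comp ((2 * (starRingEnd ℂ) (z j)) • proj j)) z := by
  have h : ∀ y : Fin 3 → ℂ, ‖y j‖ ^ 2 = ((y j) * (starRingEnd ℂ) (y j)).re := by
    intro y; rw [Complex.mul_conj]; simp [Complex.sq_norm]
  simp only [h]
  have h1 : HasFDerivAt (fun y : Fin 3 → ℂ => y j * (starRingEnd ℂ) (y j))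
      ((z j) • (Complex.conjCLE.toContinuousLinearMap.comp (proj j))
        + ((starRingEnd ℂ) (z j)) • (proj j : (Fin 3 → ℂ) →L[ℝ] ℂ)) z := by
    have hc : HasFDerivAt (fun y : Fin 3 → ℂ => (starRingEnd ℂ) (y j))
        (Complex.conjCLE.toContinuousLinearMap.comp (proj j)) z :=
      Complex.conjCLE.toContinuousLinearMap.hasFDerivAt.comp z (hasFDerivAt_apply (𝕜 := ℝ) j z)
    exact (hasFDerivAt_apply (𝕜 := ℝ) j z).mul hc
  have h2 := Complex.reCLM.hasFDerivAt.comp z h1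
  refine h2.congr_fderiv ?_
  ext w
  simp [Complex.mul_re, Complex.mul_im]
  ring

open ContinuousLinearMap in
lemma hl_hasFDerivAt (z : Fin 3 → ℂ) : HasFDerivAt HarveyLawson (HLD z) z := by
  apply hasFDerivAt_pi''
  intro i
  have key0 : HasFDerivAt (fun z : Fin 3 → ℂ => (z 0 * z 1 * z 2).im) (HLd0 z) z := by
    have h1 : HasFDerivAt (fun z : Fin 3 → ℂ => z 0 * z 1 * z 2)
        ((z 1 * z 2) • proj 0 + (z 0 * z 2) • proj 1 + (z 0 * z 1) • proj 2 :
          (Fin 3 → ℂ) →L[ℝ] ℂ) z := by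
      have := ((hasFDerivAt_apply (𝕜 := ℝ) 0 z).mul (hasFDerivAt_apply (𝕜 := ℝ) 1 z)).mul
        (hasFDerivAt_apply (𝕜 := ℝ) 2 z)
      refine this.congr_fderiv ?_
      ext w
      simp
      ring
    exact Complex.imCLM.hasFDerivAt.comp z h1
  fin_cases i
  · show HasFDerivAt (fun z : Fin 3 → ℂ => (z 0 * z 1 * z 2).im)
      ((proj 0).comp (HLD z)) z
    exact key0
  · show HasFDerivAt (fun z : Fin 3 → ℂ => ‖z 0‖ ^ 2 - ‖z 1‖ ^ 2)
      ((proj 1).comp (HLD z)) z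
    exact (normSq_hasFDerivAt z 0).sub (normSq_hasFDerivAt z 1)
  · show HasFDerivAt (fun z : Fin 3 → ℂ => ‖z 0‖ ^ 2 - ‖z 2‖ ^ 2)
      ((proj 2).comp (HLD z)) z
    exact (normSq_hasFDerivAt z 0).sub (normSq_hasFDerivAt z 2)

lemma surj_aux (T : (Fin 3 → ℂ) →L[ℝ] (Fin 3 → ℝ)) (u : Fin 3 → (Fin 3 → ℂ))
    (hdet : (Matrix.of fun i j => T (u j) i).det ≠ 0) : Function.Surjective T := by
  intro v
  have hU : IsUnit (Matrix.of fun i j => T (u j) i) :=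
    (Matrix.isUnit_iff_isUnit_det _).2 (isUnit_iff_ne_zero.2 hdet)
  obtain ⟨c, hc⟩ := (Matrix.mulVec_surjective_iff_isUnit.2 hU) v
  refine ⟨∑ j, c j • u j, ?_⟩
  funext i
  have h1 : T (∑ j, c j • u j) i = ∑ j, c j * T (u j) i := by
    rw [map_sum]
    simp [Finset.sum_apply]
  rw [h1, ← hc]
  simp [Matrix.mulVec, dotProduct, mul_comm]

lemma surjA (z : Fin 3 → ℂ) (h0 : z 0 ≠ 0) (h1 : z 1 ≠ 0) :
    Function.Surjective (HLD z) := by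
  apply surj_aux _ ![![z 0, 0, 0], ![0, z 1, 0], ![0, 0, Complex.I * (starRingEnd ℂ) (z 0 * z 1)]]
  have e00 : (HLD z) ![z 0, 0, 0] 0 = (z 0 * z 1 * z 2).im := by
    simp [HLD, HLd0, Complex.mul_im, Complex.mul_re]; ring
  have e10 : (HLD z) ![z 0, 0, 0] 1 = 2 * normSq (z 0) := by
    simp [HLD, HLd1, Complex.normSq_apply, Complex.mul_im, Complex.mul_re]; ring
  have e20 : (HLD z) ![z 0, 0, 0] 2 = 2 * normSq (z 0) := by
    simp [HLD, HLd2, Complex.normSq_apply, Complex.mul_im, Complex.mul_re]; ring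
  have e01 : (HLD z) ![0, z 1, 0] 0 = (z 0 * z 1 * z 2).im := by
    simp [HLD, HLd0, Complex.mul_im, Complex.mul_re]; ring
  have e11 : (HLD z) ![0, z 1, 0] 1 = -(2 * normSq (z 1)) := by
    simp [HLD, HLd1, Complex.normSq_apply, Complex.mul_im, Complex.mul_re]; ring
  have e21 : (HLD z) ![0, z 1, 0] 2 = 0 := by
    simp [HLD, HLd2]
  have e02 : (HLD z) ![0, 0, Complex.I * (starRingEnd ℂ) (z 0 * z 1)] 0
      = normSq (z 0) * normSq (z 1) := by
    simp [HLD, HLd0, Complex.normSq_apply, Complex.mul_im, Complex.mul_re]; ring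
  have e12 : (HLD z) ![0, 0, Complex.I * (starRingEnd ℂ) (z 0 * z 1)] 1 = 0 := by
    simp [HLD, HLd1]
  have e22 : (HLD z) ![0, 0, Complex.I * (starRingEnd ℂ) (z 0 * z 1)] 2
      = -(2 * (z 0 * z 1 * z 2).im) := by
    simp [HLD, HLd2, Complex.mul_im, Complex.mul_re]; ring
  rw [Matrix.det_fin_three]
  simp only [Matrix.of_apply, Matrix.cons_val_zero, Matrix.cons_val_one, Matrix.head_cons,
    Matrix.cons_val_two, Matrix.tail_cons, e00, e10, e20, e01, e11, e21, e02, e12, e22]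
  have hn0 := Complex.normSq_pos.2 h0
  have hn1 := Complex.normSq_pos.2 h1
  apply ne_of_gt
  nlinarith [sq_nonneg ((z 0 * z 1 * z 2).im), mul_pos hn0 hn1,
    mul_pos (mul_pos hn0 hn1) (mul_pos hn0 hn1),
    mul_nonneg (sq_nonneg ((z 0 * z 1 * z 2).im)) hn0.le,
    mul_nonneg (sq_nonneg ((z 0 * z 1 * z 2).im)) hn1.le]

lemma surjB (z : Fin 3 → ℂ) (h0 : z 0 ≠ 0) (h2 : z 2 ≠ 0) :
    Function.Surjective (HLD z) := by
  apply surj_aux _ ![![z 0, 0, 0], ![0, Complex.I * (starRingEnd ℂ) (z 0 * z 2), 0], ![0, 0, z 2]]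
  have e00 : (HLD z) ![z 0, 0, 0] 0 = (z 0 * z 1 * z 2).im := by
    simp [HLD, HLd0, Complex.mul_im, Complex.mul_re]; ring
  have e10 : (HLD z) ![z 0, 0, 0] 1 = 2 * normSq (z 0) := by
    simp [HLD, HLd1, Complex.normSq_apply, Complex.mul_im, Complex.mul_re]; ring
  have e20 : (HLD z) ![z 0, 0, 0] 2 = 2 * normSq (z 0) := by
    simp [HLD, HLd2, Complex.normSq_apply, Complex.mul_im, Complex.mul_re]; ring
  have e01 : (HLD z) ![0, Complex.I * (starRingEnd ℂ) (z 0 * z 2), 0] 0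
      = normSq (z 0) * normSq (z 2) := by
    simp [HLD, HLd0, Complex.normSq_apply, Complex.mul_im, Complex.mul_re]; ring
  have e11 : (HLD z) ![0, Complex.I * (starRingEnd ℂ) (z 0 * z 2), 0] 1
      = -(2 * (z 0 * z 1 * z 2).im) := by
    simp [HLD, HLd1, Complex.mul_im, Complex.mul_re]; ring
  have e21 : (HLD z) ![0, Complex.I * (starRingEnd ℂ) (z 0 * z 2), 0] 2 = 0 := by
    simp [HLD, HLd2]
  have e02 : (HLD z) ![0, 0, z 2] 0 = (z 0 * z 1 * z 2).im := by
    simp [HLD, HLd0, Complex.mul_im, Complex.mul_re]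
  have e12 : (HLD z) ![0, 0, z 2] 1 = 0 := by
    simp [HLD, HLd1]
  have e22 : (HLD z) ![0, 0, z 2] 2 = -(2 * normSq (z 2)) := by
    simp [HLD, HLd2, Complex.normSq_apply, Complex.mul_im, Complex.mul_re]; ring
  rw [Matrix.det_fin_three]
  simp only [Matrix.of_apply, Matrix.cons_val_zero, Matrix.cons_val_one, Matrix.head_cons,
    Matrix.cons_val_two, Matrix.tail_cons, e00, e10, e20, e01, e11, e21, e02, e12, e22]
  have hn0 := Complex.normSq_pos.2 h0
  have hn2 := Complex.normSq_pos.2 h2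
  apply ne_of_gt
  nlinarith [sq_nonneg ((z 0 * z 1 * z 2).im), mul_pos hn0 hn2,
    mul_pos (mul_pos hn0 hn2) (mul_pos hn0 hn2),
    mul_nonneg (sq_nonneg ((z 0 * z 1 * z 2).im)) hn0.le,
    mul_nonneg (sq_nonneg ((z 0 * z 1 * z 2).im)) hn2.le]

lemma surjC (z : Fin 3 → ℂ) (h1 : z 1 ≠ 0) (h2 : z 2 ≠ 0) :
    Function.Surjective (HLD z) := by
  apply surj_aux _ ![![Complex.I * (starRingEnd ℂ) (z 1 * z 2), 0, 0], ![0, z 1, 0], ![0, 0, z 2]]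
  have e00 : (HLD z) ![Complex.I * (starRingEnd ℂ) (z 1 * z 2), 0, 0] 0
      = normSq (z 1) * normSq (z 2) := by
    simp [HLD, HLd0, Complex.normSq_apply, Complex.mul_im, Complex.mul_re]; ring
  have e10 : (HLD z) ![Complex.I * (starRingEnd ℂ) (z 1 * z 2), 0, 0] 1
      = 2 * (z 0 * z 1 * z 2).im := by
    simp [HLD, HLd1, Complex.mul_im, Complex.mul_re]; ring
  have e20 : (HLD z) ![Complex.I * (starRingEnd ℂ) (z 1 * z 2), 0, 0] 2
      = 2 * (z 0 * z 1 * z 2).im := by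
    simp [HLD, HLd2, Complex.mul_im, Complex.mul_re]; ring
  have e01 : (HLD z) ![0, z 1, 0] 0 = (z 0 * z 1 * z 2).im := by
    simp [HLD, HLd0, Complex.mul_im, Complex.mul_re]; ring
  have e11 : (HLD z) ![0, z 1, 0] 1 = -(2 * normSq (z 1)) := by
    simp [HLD, HLd1, Complex.normSq_apply, Complex.mul_im, Complex.mul_re]; ring
  have e21 : (HLD z) ![0, z 1, 0] 2 = 0 := by
    simp [HLD, HLd2]
  have e02 : (HLD z) ![0, 0, z 2] 0 = (z 0 * z 1 * z 2).im := by
    simp [HLD, HLd0, Complex.mul_im, Complex.mul_re]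
  have e12 : (HLD z) ![0, 0, z 2] 1 = 0 := by
    simp [HLD, HLd1]
  have e22 : (HLD z) ![0, 0, z 2] 2 = -(2 * normSq (z 2)) := by
    simp [HLD, HLd2, Complex.normSq_apply, Complex.mul_im, Complex.mul_re]; ring
  rw [Matrix.det_fin_three]
  simp only [Matrix.of_apply, Matrix.cons_val_zero, Matrix.cons_val_one, Matrix.head_cons,
    Matrix.cons_val_two, Matrix.tail_cons, e00, e10, e20, e01, e11, e21, e02, e12, e22]
  have hn1 := Complex.normSq_pos.2 h1
  have hn2 := Complex.normSq_pos.2 h2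
  apply ne_of_gt
  nlinarith [sq_nonneg ((z 0 * z 1 * z 2).im), mul_pos hn1 hn2,
    mul_pos (mul_pos hn1 hn2) (mul_pos hn1 hn2),
    mul_nonneg (sq_nonneg ((z 0 * z 1 * z 2).im)) hn1.le,
    mul_nonneg (sq_nonneg ((z 0 * z 1 * z 2).im)) hn2.le]

lemma not_surj (z : Fin 3 → ℂ) (ha : z 1 * z 2 = 0) (hb : z 0 * z 2 = 0)
    (hc : z 0 * z 1 = 0) : ¬ Function.Surjective (HLD z) := by
  intro hs
  obtain ⟨w, hw⟩ := hs (fun _ => 1)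
  have h0 := congrFun hw 0
  simp [HLD, HLd0, ha, hb, hc] at h0

/-- The real Fréchet derivative of the Harvey–Lawson map fails to be surjective at `z`
exactly when at least two of the coordinates of `z` vanish; i.e. the set of singular
points of fibers is the union of the three coordinate axes. -/
theorem harveyLawson_singular_points_eq_axes :
    {z : Fin 3 → ℂ | ¬ Function.Surjective (fderiv ℝ HarveyLawson z)} =
      {z : Fin 3 → ℂ | z 1 = 0 ∧ z 2 = 0} ∪
      {z : Fin 3 → ℂ | z 0 = 0 ∧ z 2 = 0} ∪
      {z : Fin 3 → ℂ | z 0 = 0 ∧ z 1 = 0} := by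
  ext z
  simp only [Set.mem_setOf_eq, Set.mem_union]
  rw [(hl_hasFDerivAt z).fderiv]
  constructor
  · intro h
    by_contra hcon
    push_neg at hcon
    obtain ⟨⟨h12, h02⟩, h01⟩ := hcon
    rcases eq_or_ne (z 0) 0 with hz0 | hz0
    · exact h (surjC z (h01 hz0) (h02 hz0))
    · rcases eq_or_ne (z 1) 0 with hz1 | hz1
      · exact h (surjB z hz0 (h12 hz1))
      · exact h (surjA z hz0 hz1)
  · rintro ((⟨ha, hb⟩ | ⟨ha, hb⟩) | ⟨ha, hb⟩) <;>
      apply not_surj z <;> simp [ha, hb]
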